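/- Let R = ℤ[X,Y,Z,U,V,W]/(XU+YV+ZW), graded with deg X = deg Y = deg Z = 0 and deg U = deg V = deg W = 1, so R₀ = ℤ[X,Y,Z]. For every d ≥ 3, every associated prime of the R₀-module H³_{R₊}(R)_{-d} contains the ideal (X, Y, Z); indeed X^{d-2}, Y^{d-2}, Z^{d-2} each annihilate H³_{R₊}(R)_{-d}. -/

import Mathlib

open MvPolynomial

/-- `R₀ = ℤ[X,Y,Z]`, the degree-zero part of Singh's example
`R = ℤ[X,Y,Z,U,V,W]/(XU+YV+ZW)`; we write `X = X 0`, `Y = X 1`, `Z = X 2`. -/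
abbrev R0 : Type := MvPolynomial (Fin 3) ℤ

/-- Index set for the monomial basis `U^{-(v 0 + 1)} V^{-(v 1 + 1)} W^{-(v 2 + 1)}`
of the degree `-(n+3)` component of the inverse polynomial module
`ℤ[X,Y,Z][U⁻,V⁻,W⁻] ≅ H³_{(U,V,W)}(ℤ[X,Y,Z,U,V,W])`. -/
def idx (n : ℕ) : Type := {v : Fin 3 → ℕ // v 0 + v 1 + v 2 = n}

instance (n : ℕ) : DecidableEq (idx n) := by unfold idx; infer_instance

/-- The degree `-(n+3)` component of the inverse polynomial module, a free
`R₀`-module on `idx n`. -/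
abbrev Cmp (n : ℕ) : Type := idx n →₀ R0

/-- Multiplication by `F = XU + YV + ZW` from the degree `-(n+4)` component to the
degree `-(n+3)` component of the inverse polynomial module:
`F · U^α V^β W^γ = X(1-δ_{α,-1})U^{α+1}V^βW^γ + Y(1-δ_{β,-1})U^αV^{β+1}W^γ +
Z(1-δ_{γ,-1})U^αV^βW^{γ+1}`. -/
noncomputable def Fmul (n : ℕ) : Cmp (n + 1) →ₗ[R0] Cmp n :=
  Finsupp.lsum ℤ fun v => LinearMap.toSpanSingleton R0 (Cmp n)
    (∑ i : Fin 3, if h : 1 ≤ v.1 i then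
        (X i : R0) • Finsupp.single
          (⟨fun j => if j = i then v.1 j - 1 else v.1 j, by
              have hv := v.2; have h' := h
              fin_cases i <;> simp_all [Fin.ext_iff] <;> omega⟩ : idx n)
          (1 : R0)
      else 0)

namespace SinghAux
open MvPolynomial

def inc {n : ℕ} (v : idx n) (i : Fin 3) : idx (n + 1) :=
  ⟨fun j => if j = i then v.1 j + 1 else v.1 j, by
    have hv := v.2; fin_cases i <;> simp_all [Fin.ext_iff] <;> omega⟩

noncomputable def corr {n : ℕ} (v : idx n) (i j : Fin 3) : Cmp n :=
  if h : j ≠ i ∧ 1 ≤ v.1 j then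
    (X j : R0) • Finsupp.single
      (⟨fun k => if k = j then v.1 k - 1 else if k = i then v.1 k + 1 else v.1 k, by
        have hv := v.2; obtain ⟨h1, h2⟩ := h
        fin_cases i <;> fin_cases j <;> simp_all [Fin.ext_iff] <;> omega⟩ : idx n) (1 : R0)
  else 0

lemma Fmul_single {n : ℕ} (w : idx (n+1)) :
    Fmul n (Finsupp.single w (1:R0)) =
      ∑ i : Fin 3, if h : 1 ≤ w.1 i then
        (X i : R0) • Finsupp.single
          (⟨fun j => if j = i then w.1 j - 1 else w.1 j, by
              have hv := w.2; have h' := h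
              fin_cases i <;> simp_all [Fin.ext_iff] <;> omega⟩ : idx n)
          (1 : R0)
      else 0 := by
  simp [Fmul, Finsupp.lsum_single, LinearMap.toSpanSingleton_apply]
  rfl

lemma decomp {n : ℕ} (v : idx n) (i : Fin 3) :
    Fmul n (Finsupp.single (inc v i) (1:R0)) =
      (X i : R0) • Finsupp.single v (1:R0) + ∑ j : Fin 3, corr v i j := by
  rw [Fmul_single]
  have hterm : ∀ j : Fin 3,
      (if h : 1 ≤ (inc v i).1 j then
        (X j : R0) • Finsupp.single
          (⟨fun k => if k = j then (inc v i).1 k - 1 else (inc v i).1 k, by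
              have hv := (inc v i).2; have h' := h
              fin_cases j <;> simp_all [Fin.ext_iff] <;> omega⟩ : idx n)
          (1 : R0)
      else 0) =
      (if j = i then (X i : R0) • Finsupp.single v (1:R0) else 0) + corr v i j := by
    intro j
    by_cases hji : j = i
    · subst hji
      have hc : 1 ≤ (inc v j).1 j := by simp [inc]
      erw [dif_pos hc, if_pos rfl, corr, dif_neg (by simp), add_zero]
      refine congrArg₂ _ rfl (congrArg (fun w => Finsupp.single w (1:R0)) ?_)
      apply Subtype.ext
      funext k
      by_cases hk : k = j <;> simp [inc, hk]
    · have hcoe : (inc v i).1 j = v.1 j := by simp [inc, hji]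
      by_cases hv1 : 1 ≤ v.1 j
      · erw [dif_pos (hcoe ▸ hv1), if_neg hji, corr, dif_pos ⟨hji, hv1⟩, zero_add]
        refine congrArg₂ _ rfl (congrArg (fun w => Finsupp.single w (1:R0)) ?_)
        apply Subtype.ext
        funext k
        by_cases hk : k = j
        · simp [inc, hk, hji]
        · by_cases hk2 : k = i <;> simp [inc, hk, hk2, Ne.symm hji]
      · erw [dif_neg (by rw [hcoe]; exact hv1), if_neg hji, corr,
          dif_neg (by tauto), zero_add]
        rfl
  calc (∑ j : Fin 3, if h : 1 ≤ (inc v i).1 j then _ else 0)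
      = ∑ j : Fin 3, ((if j = i then (X i : R0) • Finsupp.single v (1:R0) else 0) + corr v i j) :=
        Finset.sum_congr rfl (fun j _ => hterm j)
    _ = _ := by rw [Finset.sum_add_distrib, Finset.sum_ite_eq' Finset.univ i]; simp

lemma key (n : ℕ) (i : Fin 3) : ∀ (m : ℕ) (v : idx n), n - v.1 i ≤ m →
    (X i : R0) ^ (m + 1) • Finsupp.single v (1:R0) ∈ LinearMap.range (Fmul n) := by
  intro m
  induction m with
  | zero =>
    intro v hv
    have hcorr : ∀ j : Fin 3, corr v i j = 0 := by
      intro j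
      erw [corr, dif_neg]
      rintro ⟨hji, hj1⟩
      have h2 := v.2
      fin_cases i <;> fin_cases j <;> simp_all [Fin.ext_iff] <;> omega
    refine ⟨Finsupp.single (inc v i) (1:R0), ?_⟩
    rw [decomp, pow_one]
    simp [hcorr]
  | succ m ih =>
    intro v hv
    have hXv : (X i : R0) • Finsupp.single v (1:R0) =
        Fmul n (Finsupp.single (inc v i) (1:R0)) - ∑ j : Fin 3, corr v i j := by
      rw [decomp]; exact (add_sub_cancel_right _ _).symm
    have : (X i : R0) ^ (m + 1 + 1) • Finsupp.single v (1:R0) =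
        (X i : R0) ^ (m + 1) • ((X i : R0) • Finsupp.single v (1:R0)) := by
      rw [← smul_assoc, smul_eq_mul, pow_succ, mul_comm]
    rw [this, hXv, smul_sub]
    apply sub_mem
    · rw [← map_smul]
      exact ⟨_, rfl⟩
    · rw [Finset.smul_sum]
      apply Submodule.sum_mem
      intro j _
      by_cases hj : j ≠ i ∧ 1 ≤ v.1 j
      · erw [corr, dif_pos hj]
        set u : idx n := ⟨fun k => if k = j then v.1 k - 1 else if k = i then v.1 k + 1 else v.1 k, _⟩ with hu
        have hui : u.1 i = v.1 i + 1 := by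
          simp [hu, Ne.symm hj.1]
        erw [smul_smul, mul_comm, ← smul_smul]
        apply Submodule.smul_mem
        apply ih
        omega
      · erw [corr, dif_neg hj, smul_zero]
        exact zero_mem _

end SinghAux
/-- For every `d ≥ 3`, each of `X^{d-2}`, `Y^{d-2}`, `Z^{d-2}` annihilates the
degree `-d` component `H³_{R₊}(R)_{-d}` of Singh's example (realized as the
cokernel of multiplication by `F = XU+YV+ZW` on inverse polynomials), and hence
every associated prime of this `ℤ[X,Y,Z]`-module contains the ideal `(X,Y,Z)`. -/
theorem singh_ass_primes_contain_XYZ (d : ℕ) (hd : 3 ≤ d) :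
    (∀ i : Fin 3, (X i : R0) ^ (d - 2) ∈
        Module.annihilator R0 (Cmp (d - 3) ⧸ LinearMap.range (Fmul (d - 3)))) ∧
    (∀ P : Ideal R0,
        IsAssociatedPrime P (Cmp (d - 3) ⧸ LinearMap.range (Fmul (d - 3))) →
          ∀ i : Fin 3, (X i : R0) ∈ P) := by
  set n := d - 3 with hn
  have hexp : d - 2 = n + 1 := by omega
  have h1 : ∀ i : Fin 3, (X i : R0) ^ (d - 2) ∈
      Module.annihilator R0 (Cmp n ⧸ LinearMap.range (Fmul n)) := by
    intro i
    rw [Module.mem_annihilator]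
    intro q
    obtain ⟨c, rfl⟩ := Submodule.Quotient.mk_surjective _ q
    rw [← Submodule.Quotient.mk_smul, Submodule.Quotient.mk_eq_zero]
    induction c using Finsupp.induction with
    | zero => rw [smul_zero]; exact zero_mem _
    | single_add a b f _ _ ihf =>
      rw [smul_add]
      apply add_mem _ ihf
      have hb : Finsupp.single a b = b • Finsupp.single a (1:R0) := by
        rw [Finsupp.smul_single, smul_eq_mul, mul_one]
      rw [hb, smul_comm]
      apply Submodule.smul_mem
      rw [hexp]
      exact SinghAux.key n i n a (Nat.sub_le _ _)
  refine ⟨h1, ?_⟩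
  rintro P ⟨hPprime, x, rfl⟩ i
  apply hPprime.mem_of_pow_mem (d - 2)
  apply Ideal.le_radical
  rw [Submodule.mem_colon_singleton, Submodule.mem_bot]
  exact Module.mem_annihilator.1 (h1 i) x
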